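/- Let G be a finite sober connected simple graph. Then c-rk(G) = 3 if and only if G has at least 2 edges and contains no 4-cycle. -/

import Mathlib

/-- `St(W)`: the set of vertices adjacent to every vertex of `W` (so `St(∅) = V`). -/
def starW {V : Type*} (G : SimpleGraph V) (W : Set V) : Set V := {v | ∀ w ∈ W, G.Adj v w}

/-- The flats of `G`: all sets of the form `St(W)`, `W ⊆ V`. -/
def flats {V : Type*} (G : SimpleGraph V) : Set (Set V) := {X | ∃ W : Set V, X = starW G W}

/-- Height of a family of sets: the largest `k` admitting a strictly decreasing chain
`X₀ ⊃ X₁ ⊃ … ⊃ X_k` inside the family. -/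
noncomputable def heightOf {V : Type*} (F : Set (Set V)) : ℕ :=
  sSup {k | ∃ c : Fin (k + 1) → Set V, StrictAnti c ∧ ∀ i, c i ∈ F}

/-- The c-rank of a graph: the height of its lattice of flats. -/
noncomputable def crk {V : Type*} (G : SimpleGraph V) : ℕ := heightOf (flats G)

/-- `J` has a witness in `A_G^c`: there is an equal-size row set such that the corresponding
submatrix of the complemented adjacency matrix can be put in lower unitriangular form
(1's on the diagonal, 0's above) by independently permuting rows and columns. -/
def hasWitness {V : Type*} (G : SimpleGraph V) (J : Finset V) : Prop :=
  ∃ i : Fin J.card → V, ∃ j : Fin J.card → V,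
    Function.Injective i ∧ Function.Injective j ∧ (∀ r, j r ∈ J) ∧
    (∀ r, ¬ G.Adj (i r) (j r)) ∧ (∀ r s, r < s → G.Adj (i r) (j s))

/-- The c-rank of `G` defined via witnesses: maximum size of a vertex subset with a witness. -/
noncomputable def crkW {V : Type*} (G : SimpleGraph V) : ℕ :=
  sSup {k | ∃ J : Finset V, J.card = k ∧ hasWitness G J}

/-- A graph is sober if the star map `v ↦ St(v)` is injective. -/
def Sober {V : Type*} (G : SimpleGraph V) : Prop :=
  Function.Injective fun v => G.neighborSet v

/-! ### Auxiliary: staircase patterns -/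

/-- A "staircase" of size `k`: rows `i`, columns `j` with `¬Adj (i r) (j r)` and
`Adj (i r) (j s)` for `s < r`. -/
def Stair {V : Type*} (G : SimpleGraph V) (k : ℕ) : Prop :=
  ∃ i j : Fin k → V, (∀ r, ¬ G.Adj (i r) (j r)) ∧ ∀ s r : Fin k, s < r → G.Adj (i r) (j s)

theorem chain_to_stair {V : Type*} (G : SimpleGraph V) (k : ℕ)
    (c : Fin (k+1) → Set V) (hc : StrictAnti c) (hf : ∀ i, c i ∈ flats G) :
    Stair G k := by
  have H : ∀ r : Fin k, ∃ x y : V, ¬ G.Adj x y ∧ x ∈ c r.castSucc ∧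
      ∀ z ∈ c r.succ, G.Adj z y := by
    intro r
    have hlt : c r.succ < c r.castSucc := hc (Fin.castSucc_lt_succ : r.castSucc < r.succ)
    obtain ⟨x, hx1, hx2⟩ := Set.exists_of_ssubset hlt
    obtain ⟨W, hW⟩ := hf r.succ
    rw [hW] at hx2
    simp only [starW, Set.mem_setOf_eq, not_forall] at hx2
    obtain ⟨y, hyW, hxy⟩ := hx2
    exact ⟨x, y, hxy, hx1, fun z hz => by rw [hW] at hz; exact hz y hyW⟩
  choose i j hna hi hadj using H
  refine ⟨i, j, hna, fun s r hsr => ?_⟩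
  have hsr' : (s : ℕ) < (r : ℕ) := hsr
  have hle : (s.succ : Fin (k+1)) ≤ r.castSucc := by
    rw [Fin.le_def]; simp; omega
  exact hadj s (i r) (hc.antitone hle (hi r))

theorem stair_to_chain {V : Type*} (G : SimpleGraph V) (k : ℕ) (h : Stair G k) :
    ∃ c : Fin (k+1) → Set V, StrictAnti c ∧ ∀ i, c i ∈ flats G := by
  obtain ⟨i, j, hn, ha⟩ := h
  refine ⟨fun r => starW G {v | ∃ s : Fin k, (s : ℕ) < (r : ℕ) ∧ j s = v}, ?_, ?_⟩
  · intro r1 r2 h12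
    have h12' : (r1 : ℕ) < (r2 : ℕ) := h12
    rw [lt_iff_le_not_ge]
    constructor
    · intro x hx w hw
      obtain ⟨s, hs, rfl⟩ := hw
      exact hx _ ⟨s, by omega, rfl⟩
    · intro hsub
      have hr1k : (r1 : ℕ) < k := by have := r2.isLt; omega
      have hx1 : i ⟨r1, hr1k⟩ ∈ starW G {v | ∃ s : Fin k, (s : ℕ) < (r1 : ℕ) ∧ j s = v} := by
        intro w hw
        obtain ⟨s, hs, rfl⟩ := hw
        exact ha s ⟨r1, hr1k⟩ hs
      have hx2 := hsub hx1
      exact hn ⟨r1, hr1k⟩ (hx2 (j ⟨r1, hr1k⟩) ⟨⟨r1, hr1k⟩, by simpa using h12', rfl⟩)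
  · intro r; exact ⟨_, rfl⟩

theorem stair_mono {V : Type*} (G : SimpleGraph V) {m k : ℕ} (hmk : m ≤ k)
    (h : Stair G k) : Stair G m := by
  obtain ⟨i, j, hn, ha⟩ := h
  exact ⟨i ∘ Fin.castLE hmk, j ∘ Fin.castLE hmk, fun r => hn _,
    fun s r hsr => ha _ _ hsr⟩

/-! ### Auxiliary: combinatorics -/

lemma sober_sep {V : Type*} (G : SimpleGraph V) (hsober : Sober G) {a c : V} (hac : a ≠ c) :
    ∃ x, (G.Adj a x ∧ ¬ G.Adj c x) ∨ (G.Adj c x ∧ ¬ G.Adj a x) := by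
  by_contra h
  push_neg at h
  exact hac (hsober (by ext x; simp only [SimpleGraph.mem_neighborSet]; exact ⟨(h x).1, (h x).2⟩))

lemma stair3_build {V : Type*} (G : SimpleGraph V) (a c b x : V)
    (hba : G.Adj b a) (hbc : G.Adj b c) (hxa : G.Adj x a) (hxc : ¬ G.Adj x c) :
    Stair G 3 := by
  refine ⟨![a, x, b], ![a, c, b], ?_, ?_⟩
  · intro r
    fin_cases r <;> simp [G.irrefl, hxc]
  · intro s r hsr
    have h' : (s : ℕ) < (r : ℕ) := hsr
    fin_cases s <;> fin_cases r <;> simp_all [hxa, hba, hbc]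

lemma stair3_exists {V : Type*} [Fintype V] (G : SimpleGraph V) [DecidableRel G.Adj]
    (hsober : Sober G) (hconn : G.Connected) (h2 : 2 ≤ G.edgeFinset.card) :
    Stair G 3 := by
  have hdeg : ∃ b a c : V, a ≠ c ∧ G.Adj b a ∧ G.Adj b c := by
    by_contra hdeg
    push_neg at hdeg
    have H : ∀ b a c : V, G.Adj b a → G.Adj b c → a = c := by
      intro b a c h1 h2'
      by_contra hne
      exact (hdeg b a c hne h1) h2'
    obtain ⟨e1, he1, e2, he2, hne⟩ := Finset.one_lt_card.mp (by omega : 1 < G.edgeFinset.card)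
    rw [SimpleGraph.mem_edgeFinset] at he1 he2
    induction e1 with
    | h x y =>
    have hxy : G.Adj x y := he1
    have hclosed : ∀ (u v : V), (u = x ∨ u = y) → (p : G.Walk u v) → (v = x ∨ v = y) := by
      intro u v hu p
      induction p with
      | nil => exact hu
      | cons hadj p ih =>
        rcases hu with rfl | rfl
        · exact ih (Or.inr (H _ _ _ hadj hxy))
        · exact ih (Or.inl (H _ _ _ hadj hxy.symm))
    have hall : ∀ v : V, v = x ∨ v = y := fun v =>
      hclosed x v (Or.inl rfl) (hconn.preconnected x v).some
    induction e2 with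
    | h u v =>
    have huv : G.Adj u v := he2
    have hune := huv.ne
    apply hne
    rcases hall u with rfl | rfl <;> rcases hall v with rfl | rfl
    · exact absurd rfl hune
    · rfl
    · exact Sym2.eq_swap
    · exact absurd rfl hune
  obtain ⟨b, a, c, hac, hba, hbc⟩ := hdeg
  obtain ⟨x, hx⟩ := sober_sep G hsober hac
  rcases hx with ⟨hxa, hxc⟩ | ⟨hxc, hxa⟩
  · exact stair3_build G a c b x hba hbc hxa.symm (fun h => hxc h.symm)
  · exact stair3_build G c a b x hbc hba hxc.symm (fun h => hxa h.symm)

lemma stair3_edges {V : Type*} [Fintype V] (G : SimpleGraph V) [DecidableRel G.Adj]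
    (h : Stair G 3) : 2 ≤ G.edgeFinset.card := by
  obtain ⟨i, j, hn, ha⟩ := h
  have h20 : G.Adj (i 2) (j 0) := ha 0 2 (by decide)
  have h21 : G.Adj (i 2) (j 1) := ha 1 2 (by decide)
  have hj01 : j 0 ≠ j 1 := fun h => hn 1 (h ▸ ha 0 1 (by decide))
  have : 1 < G.edgeFinset.card := by
    refine Finset.one_lt_card.mpr ⟨s(i 2, j 0), ?_, s(i 2, j 1), ?_, ?_⟩
    · exact SimpleGraph.mem_edgeFinset.mpr h20
    · exact SimpleGraph.mem_edgeFinset.mpr h21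
    · simp only [ne_eq, Sym2.congr_right]
      exact hj01
  omega

lemma stair4_build {V : Type*} (G : SimpleGraph V) (v₁ v₂ v₃ v₄ w u : V)
    (h12 : G.Adj v₁ v₂) (h23 : G.Adj v₂ v₃) (h34 : G.Adj v₃ v₄) (h41 : G.Adj v₄ v₁)
    (hw1 : G.Adj v₁ w) (hw3 : ¬ G.Adj v₃ w)
    (hu4 : G.Adj v₄ u) (hu2 : ¬ G.Adj v₂ u) :
    Stair G 4 := by
  have hw3' : ¬ G.Adj w v₃ := fun h => hw3 h.symm
  refine ⟨![v₁, w, v₂, v₄], ![v₁, v₃, u, v₄], ?_, ?_⟩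
  · intro r
    fin_cases r <;>
      simp [G.irrefl, hw3', hu2]
  · intro s r hsr
    have h' : (s : ℕ) < (r : ℕ) := hsr
    fin_cases s <;> fin_cases r <;>
      simp_all [hw1.symm, h12.symm, h23, h41, h34.symm, hu4]

lemma c4_to_stair4 {V : Type*} (G : SimpleGraph V) (hsober : Sober G)
    (v₁ v₂ v₃ v₄ : V) (h13 : v₁ ≠ v₃) (h24 : v₂ ≠ v₄)
    (h12 : G.Adj v₁ v₂) (h23 : G.Adj v₂ v₃) (h34 : G.Adj v₃ v₄) (h41 : G.Adj v₄ v₁) :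
    Stair G 4 := by
  obtain ⟨w, hw⟩ := sober_sep G hsober h13
  obtain ⟨u, hu⟩ := sober_sep G hsober h24
  rcases hw with ⟨hw1, hw3⟩ | ⟨hw3, hw1⟩ <;> rcases hu with ⟨hu2, hu4⟩ | ⟨hu4, hu2⟩
  · exact stair4_build G v₁ v₄ v₃ v₂ w u h41.symm h34.symm h23.symm h12.symm hw1 hw3 hu2 hu4
  · exact stair4_build G v₁ v₂ v₃ v₄ w u h12 h23 h34 h41 hw1 hw3 hu4 hu2
  · exact stair4_build G v₃ v₄ v₁ v₂ w u h34 h41 h12 h23 hw3 hw1 hu2 hu4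
  · exact stair4_build G v₃ v₂ v₁ v₄ w u h23.symm h12.symm h41.symm h34.symm hw3 hw1 hu4 hu2

lemma stair4_to_c4 {V : Type*} (G : SimpleGraph V) (h : Stair G 4) :
    ∃ v₁ v₂ v₃ v₄ : V,
      v₁ ≠ v₂ ∧ v₁ ≠ v₃ ∧ v₁ ≠ v₄ ∧ v₂ ≠ v₃ ∧ v₂ ≠ v₄ ∧ v₃ ≠ v₄ ∧
      G.Adj v₁ v₂ ∧ G.Adj v₂ v₃ ∧ G.Adj v₃ v₄ ∧ G.Adj v₄ v₁ := by
  obtain ⟨i, j, hn, ha⟩ := h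
  refine ⟨j 0, i 2, j 1, i 3, ?_, ?_, ?_, ?_, ?_, ?_, ?_, ?_, ?_, ?_⟩
  · exact fun h => (ha 0 2 (by decide)).ne' (h ▸ rfl)
  · intro h
    exact hn 1 (h ▸ ha 0 1 (by decide))
  · exact fun h => (ha 0 3 (by decide)).ne' (h ▸ rfl)
  · exact fun h => (ha 1 2 (by decide)).ne (h ▸ rfl)
  · intro h
    exact hn 2 (h ▸ ha 2 3 (by decide))
  · exact fun h => (ha 1 3 (by decide)).ne' (h ▸ rfl)
  · exact (ha 0 2 (by decide)).symm
  · exact ha 1 2 (by decide)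
  · exact (ha 1 3 (by decide)).symm
  · exact ha 0 3 (by decide)

/-- For a finite sober connected simple graph `G`: `c-rk G = 3` iff `G` has at least 2
edges and contains no 4-cycle. -/
theorem crk_eq_three_iff {V : Type*} [Fintype V] (G : SimpleGraph V)
    [DecidableRel G.Adj] (hsober : Sober G) (hconn : G.Connected) :
    crk G = 3 ↔
      (2 ≤ G.edgeFinset.card ∧
        ¬ ∃ v₁ v₂ v₃ v₄ : V,
          v₁ ≠ v₂ ∧ v₁ ≠ v₃ ∧ v₁ ≠ v₄ ∧ v₂ ≠ v₃ ∧ v₂ ≠ v₄ ∧ v₃ ≠ v₄ ∧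
          G.Adj v₁ v₂ ∧ G.Adj v₂ v₃ ∧ G.Adj v₃ v₄ ∧ G.Adj v₄ v₁) := by
  classical
  set S : Set ℕ := {k | ∃ c : Fin (k + 1) → Set V, StrictAnti c ∧ ∀ i, c i ∈ flats G} with hS
  have hcrk : crk G = sSup S := rfl
  have hmem_iff : ∀ k, k ∈ S ↔ Stair G k := by
    intro k
    constructor
    · rintro ⟨c, hc, hf⟩
      exact chain_to_stair G k c hc hf
    · exact stair_to_chain G k
  have hne : S.Nonempty := ⟨0, (hmem_iff 0).mpr
    ⟨Fin.elim0, Fin.elim0, fun r => r.elim0, fun s => s.elim0⟩⟩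
  have hbdd : BddAbove S := by
    haveI : Fintype (Set V) := Fintype.ofFinite (Set V)
    refine ⟨Fintype.card (Set V), fun k hk => ?_⟩
    obtain ⟨c, hc, _⟩ := hk
    have := Fintype.card_le_of_injective c hc.injective
    simp only [Fintype.card_fin] at this
    omega
  constructor
  · intro h3
    rw [hcrk] at h3
    have h3mem : 3 ∈ S := h3 ▸ Nat.sSup_mem hne hbdd
    have h4not : ¬ (4 : ℕ) ∈ S := by
      intro h4
      have := le_csSup hbdd h4
      omega
    refine ⟨stair3_edges G ((hmem_iff 3).mp h3mem), ?_⟩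
    rintro ⟨v₁, v₂, v₃, v₄, _, h13, _, _, h24, _, h12, h23, h34, h41⟩
    exact h4not ((hmem_iff 4).mpr (c4_to_stair4 G hsober v₁ v₂ v₃ v₄ h13 h24 h12 h23 h34 h41))
  · rintro ⟨h2, hno4⟩
    rw [hcrk]
    have h3mem : 3 ∈ S := (hmem_iff 3).mpr (stair3_exists G hsober hconn h2)
    refine le_antisymm ?_ (le_csSup hbdd h3mem)
    refine csSup_le hne (fun k hk => ?_)
    by_contra hk3
    have h4 : Stair G 4 := stair_mono G (by omega : 4 ≤ k) ((hmem_iff k).mp hk)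
    exact hno4 (stair4_to_c4 G h4)
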